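/- Let (Ω, F, P) be a probability space, p ∈ (0,1), and let (X_i)_{i∈ℕ} be independent real random variables on Ω each distributed according to the Bernoulli measure (1−p)·δ₀ + p·δ₁ on ℝ. Then for every x with 0 < x < p and every natural number m ≥ 1, P(⋃_{n ≥ m} {ω : ∑_{i=0}^{n−1} X_i(ω) ≤ n·x}) ≤ exp(−m·kl(x,p)). -/

import Mathlib

open MeasureTheory ProbabilityTheory Real

/-- The Bernoulli measure `(1−p)·δ₀ + p·δ₁` on `ℝ`. -/
noncomputable def bernoulliMeasureReal (p : ℝ) : Measure ℝ :=
  ENNReal.ofReal (1 - p) • Measure.dirac 0 + ENNReal.ofReal p • Measure.dirac 1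

/-- The Bernoulli Kullback–Leibler divergence. -/
noncomputable def klBer (p q : ℝ) : ℝ :=
  p * Real.log (p / q) + (1 - p) * Real.log ((1 - p) / (1 - q))


lemma integrable_dirac'' {g : ℝ → ℝ} (hg : Measurable g) (a : ℝ) :
    Integrable g (Measure.dirac a) := by
  refine ⟨hg.aestronglyMeasurable, ?_⟩
  rw [HasFiniteIntegral, lintegral_dirac' a (by measurability)]
  simp

lemma integrable_bern {p : ℝ} (hp : p ∈ Set.Ioo (0:ℝ) 1) {g : ℝ → ℝ} (hg : Measurable g) :
    Integrable g (bernoulliMeasureReal p) := by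
  obtain ⟨hp0, hp1⟩ := hp
  rw [bernoulliMeasureReal, integrable_add_measure]
  constructor
  · rw [integrable_smul_measure (by simp; linarith) (by simp)]
    exact integrable_dirac'' hg 0
  · rw [integrable_smul_measure (by simp; linarith) (by simp)]
    exact integrable_dirac'' hg 1

lemma integral_bern {p : ℝ} (hp : p ∈ Set.Ioo (0:ℝ) 1) {g : ℝ → ℝ} (hg : Measurable g) :
    ∫ y, g y ∂(bernoulliMeasureReal p) = (1 - p) * g 0 + p * g 1 := by
  obtain ⟨hp0, hp1⟩ := hp
  rw [bernoulliMeasureReal, integral_add_measure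
      ((integrable_smul_measure (by simp; linarith) (by simp)).2 (integrable_dirac'' hg 0))
      ((integrable_smul_measure (by simp; linarith) (by simp)).2 (integrable_dirac'' hg 1)),
    integral_smul_measure, integral_smul_measure, integral_dirac, integral_dirac,
    ENNReal.toReal_ofReal (by linarith), ENNReal.toReal_ofReal (by linarith)]
  simp [smul_eq_mul]

lemma klBer_nonneg' {x p : ℝ} (hx : 0 < x) (hxp : x < p) (hp1 : p < 1) :
    0 ≤ klBer x p := by
  have hx1 : x < 1 := hxp.trans hp1
  have h1 : Real.log (p / x) ≤ p / x - 1 :=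
    Real.log_le_sub_one_of_pos (by apply div_pos <;> linarith)
  have h2 : Real.log ((1 - p) / (1 - x)) ≤ (1 - p) / (1 - x) - 1 :=
    Real.log_le_sub_one_of_pos (by apply div_pos <;> linarith)
  have e1 : Real.log (x / p) = - Real.log (p / x) := by
    rw [← Real.log_inv]; congr 1; field_simp
  have e2 : Real.log ((1 - x) / (1 - p)) = - Real.log ((1 - p) / (1 - x)) := by
    rw [← Real.log_inv]; congr 1; field_simp
  rw [klBer, e1, e2]
  have h1' : x * Real.log (p / x) ≤ p - x := by
    have := mul_le_mul_of_nonneg_left h1 hx.le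
    calc x * Real.log (p / x) ≤ x * (p / x - 1) := this
      _ = p - x := by field_simp
  have h2' : (1 - x) * Real.log ((1 - p) / (1 - x)) ≤ x - p := by
    have h1x : (0:ℝ) < 1 - x := by linarith
    have := mul_le_mul_of_nonneg_left h2 h1x.le
    calc (1 - x) * Real.log ((1 - p) / (1 - x)) ≤ (1 - x) * ((1 - p) / (1 - x) - 1) := this
      _ = x - p := by field_simp; ring
  nlinarith [h1', h2']

theorem bernoulli_time_uniform_concentration
    {Ω : Type*} [MeasurableSpace Ω] (P : Measure Ω) [IsProbabilityMeasure P]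
    (p : ℝ) (hp : p ∈ Set.Ioo (0 : ℝ) 1) (X : ℕ → Ω → ℝ)
    (hindep : iIndepFun X P)
    (hmeas : ∀ i, Measurable (X i))
    (hdist : ∀ i, P.map (X i) = bernoulliMeasureReal p)
    (x : ℝ) (hx : 0 < x) (hxp : x < p) (m : ℕ) (hm : 1 ≤ m) :
    P (⋃ n ∈ {n : ℕ | m ≤ n}, {ω | ∑ i ∈ Finset.range n, X i ω ≤ (n : ℝ) * x})
      ≤ ENNReal.ofReal (Real.exp (-(m : ℝ) * klBer x p)) := by
  obtain ⟨hp0, hp1⟩ := hp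
  have hx1 : x < 1 := hxp.trans hp1
  have h1x : (0:ℝ) < 1 - x := by linarith
  have h1p : (0:ℝ) < 1 - p := by linarith
  set a : ℝ := Real.log ((1 - x) / (1 - p)) with ha_def
  set b : ℝ := Real.log (x / p) with hb_def
  have hea : Real.exp a = (1 - x) / (1 - p) := Real.exp_log (by positivity)
  have heb : Real.exp b = x / p := Real.exp_log (by positivity)
  have hba : b - a ≤ 0 := by
    have hb' : b < 0 := Real.log_neg (by positivity) (by rw [div_lt_one hp0]; exact hxp)
    have ha' : 0 < a := Real.log_pos (by rw [lt_div_iff₀ h1p]; linarith)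
    linarith
  have hkl : klBer x p = x * b + (1 - x) * a := by rw [klBer]
  have hklnn : 0 ≤ klBer x p := klBer_nonneg' hx hxp hp1
  set g : ℝ → ℝ := fun y => Real.exp (a + (b - a) * y) with hg_def
  have hgmeas : Measurable g := by
    exact (measurable_const.add (measurable_id.const_mul _)).exp
  have hg0 : g 0 = (1 - x) / (1 - p) := by simp [hg_def, hea]
  have hg1 : g 1 = x / p := by simp [hg_def, ← heb]
  set h : ℕ → Ω → ℝ := fun i => g ∘ X i with hh_def
  have hhmeas : ∀ i, Measurable (h i) := fun i => hgmeas.comp (hmeas i)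
  have hhsm : ∀ i, StronglyMeasurable (h i) := fun i => (hhmeas i).stronglyMeasurable
  have hindep_h : iIndepFun h P :=
    hindep.comp (fun _ => g) (fun _ => hgmeas)
  have hint_h : ∀ i, Integrable (h i) P := by
    intro i
    have : Integrable g (P.map (X i)) := by
      rw [hdist i]; exact integrable_bern ⟨hp0, hp1⟩ hgmeas
    exact (integrable_map_measure hgmeas.aestronglyMeasurable (hmeas i).aemeasurable).1 this
  have hmean_h : ∀ i, ∫ ω, h i ω ∂P = 1 := by
    intro i
    have h1 : ∫ ω, h i ω ∂P = ∫ y, g y ∂(P.map (X i)) :=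
      (integral_map (hmeas i).aemeasurable hgmeas.aestronglyMeasurable).symm
    rw [h1, hdist i, integral_bern ⟨hp0, hp1⟩ hgmeas, hg0, hg1]
    field_simp; ring
  -- products
  have key : ∀ n, Integrable (fun ω => ∏ i ∈ Finset.range n, h i ω) P ∧
      (∫ ω, ∏ i ∈ Finset.range n, h i ω ∂P) = 1 := by
    intro n
    induction n with
    | zero => simp
    | succ n ih =>
      have hip : IndepFun (fun ω => ∏ i ∈ Finset.range n, h i ω) (h n) P := by
        have := hindep_h.indepFun_finsetProd_of_notMem hhmeas
          (Finset.notMem_range_self (n := n))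
        convert this using 2
        simp [Finset.prod_apply]
      have hint : Integrable (fun ω => (∏ i ∈ Finset.range n, h i ω) * h n ω) P :=
        hip.integrable_mul ih.1 (hint_h n)
      constructor
      · simpa [Finset.prod_range_succ] using hint
      · have := hip.integral_mul_eq_mul_integral ih.1.aestronglyMeasurable (hint_h n).aestronglyMeasurable
        simp only [Finset.prod_range_succ]
        calc ∫ ω, (∏ i ∈ Finset.range n, h i ω) * h n ω ∂P
            = (∫ ω, ∏ i ∈ Finset.range n, h i ω ∂P) * ∫ ω, h n ω ∂P := this
          _ = 1 := by rw [ih.2, hmean_h]; norm_num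
  set f : ℕ → Ω → ℝ := fun n ω => ∏ i ∈ Finset.range (n+1), h i ω with hf_def
  have hint_f : ∀ n, Integrable (f n) P := fun n => (key (n+1)).1
  have hf_exp : ∀ n ω, (∏ i ∈ Finset.range n, h i ω)
      = Real.exp ((n:ℝ) * a + (b - a) * ∑ i ∈ Finset.range n, X i ω) := by
    intro n ω
    have e0 : ∏ i ∈ Finset.range n, h i ω
        = ∏ i ∈ Finset.range n, Real.exp (a + (b - a) * X i ω) := rfl
    rw [e0, ← Real.exp_sum]
    congr 1
    rw [Finset.sum_add_distrib, Finset.sum_const, ← Finset.mul_sum]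
    simp [nsmul_eq_mul]
  have hf_pos : ∀ n ω, 0 < f n ω := by
    intro n ω; rw [hf_def]; dsimp only; rw [hf_exp]; exact Real.exp_pos _
  -- filtration and martingale
  set 𝒢 := MeasureTheory.Filtration.natural h hhsm with h𝒢
  have hadp : StronglyAdapted 𝒢 f := by
    intro n
    refine Finset.stronglyMeasurable_fun_prod _ fun i hi => ?_
    have hle : MeasurableSpace.comap (h i) inferInstance ≤ 𝒢 n := by
      rw [h𝒢]
      exact le_iSup₂ (f := fun j (_ : j ≤ n) =>
        MeasurableSpace.comap (h j) inferInstance) i (Finset.mem_range_succ_iff.1 hi)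
    exact ((comap_measurable (h i)).mono hle le_rfl).stronglyMeasurable
  have hmart : Martingale f 𝒢 P := by
    refine martingale_nat hadp hint_f fun n => ?_
    have hstep : f (n+1) = f n * h (n+1) := by
      funext ω; rw [hf_def]; exact Finset.prod_range_succ _ _
    have hmul : P[f (n+1)|𝒢 n] =ᵐ[P] f n * P[h (n+1)|𝒢 n] := by
      rw [hstep]
      exact condExp_mul_of_stronglyMeasurable_left (hadp n) (hstep ▸ hint_f (n+1)) (hint_h (n+1))
    have hcond : P[h (n+1)|𝒢 n] =ᵐ[P] fun _ => ∫ ω, h (n+1) ω ∂P :=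
      ProbabilityTheory.iIndepFun.condExp_natural_ae_eq_of_lt hhsm hindep_h (Nat.lt_succ_self n)
    refine (hmul.trans ?_).symm
    filter_upwards [hcond] with ω hω
    simp only [Pi.mul_apply, hω, hmean_h, mul_one]
  -- maximal inequality
  set ε : NNReal := ⟨Real.exp ((m:ℝ) * klBer x p), (Real.exp_pos _).le⟩ with hε_def
  have hεcoe : (ε : ℝ) = Real.exp ((m:ℝ) * klBer x p) := rfl
  have hε0 : (ε : ENNReal) ≠ 0 := by
    simp only [ne_eq, ENNReal.coe_eq_zero]
    exact ne_of_gt (by exact_mod_cast Real.exp_pos _)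
  set A : ℕ → Set Ω := fun N =>
    {ω | (ε : ℝ) ≤ (Finset.range (N+1)).sup' Finset.nonempty_range_add_one fun k => f k ω} with hA_def
  have hbound : ∀ N, P (A N) ≤ ENNReal.ofReal (Real.exp (-(m:ℝ) * klBer x p)) := by
    intro N
    have h1 := maximal_ineq hmart.submartingale (fun n ω => (hf_pos n ω).le) (ε := ε) N
    have h2 : ∫ ω in A N, f N ω ∂P ≤ ∫ ω, f N ω ∂P :=
      setIntegral_le_integral (hint_f N) (Filter.Eventually.of_forall fun ω => (hf_pos N ω).le)
    have h3 : (ε : ENNReal) * P (A N) ≤ 1 := by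
      calc (ε : ENNReal) * P (A N) = ε • P (A N) := rfl
        _ ≤ ENNReal.ofReal (∫ ω in A N, f N ω ∂P) := h1
        _ ≤ ENNReal.ofReal (∫ ω, f N ω ∂P) := ENNReal.ofReal_le_ofReal h2
        _ = 1 := by rw [(key (N+1)).2]; simp
    have h4 : P (A N) ≤ (ε : ENNReal)⁻¹ := by
      rw [ENNReal.le_inv_iff_mul_le]
      rwa [mul_comm]
    refine h4.trans_eq ?_
    rw [show ((ε : ENNReal)) = ENNReal.ofReal (Real.exp ((m:ℝ) * klBer x p)) by
        rw [ENNReal.ofReal, Real.toNNReal_of_nonneg (Real.exp_pos _).le]; rfl,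
      ← ENNReal.ofReal_inv_of_pos (Real.exp_pos _), ← Real.exp_neg, neg_mul]
  have hmonoA : Monotone A := by
    intro N M hNM ω hω
    exact le_trans hω (Finset.sup'_mono (fun k => f k ω)
      (Finset.range_subset_range.2 (Nat.succ_le_succ hNM)) Finset.nonempty_range_add_one)
  have hsub : (⋃ n ∈ {n : ℕ | m ≤ n}, {ω | ∑ i ∈ Finset.range n, X i ω ≤ (n:ℝ) * x})
      ⊆ ⋃ N, A N := by
    intro ω hω
    simp only [Set.mem_iUnion, Set.mem_setOf_eq] at hω ⊢
    obtain ⟨n, hn, hωn⟩ := hω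
    have hn1 : 1 ≤ n := le_trans hm hn
    refine ⟨n - 1, ?_⟩
    have hrange : n - 1 + 1 = n := Nat.succ_pred_eq_of_pos hn1
    have hfval : f (n-1) ω = Real.exp ((n:ℝ) * a + (b - a) * ∑ i ∈ Finset.range n, X i ω) := by
      rw [hf_def]; dsimp only; rw [hrange, hf_exp]
    have hstep1 : (m:ℝ) * klBer x p ≤ (n:ℝ) * klBer x p :=
      mul_le_mul_of_nonneg_right (by exact_mod_cast hn) hklnn
    have hstep2 : (n:ℝ) * klBer x p ≤ (n:ℝ) * a + (b - a) * ∑ i ∈ Finset.range n, X i ω := by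
      have hlin : (b - a) * ((n:ℝ) * x) ≤ (b - a) * ∑ i ∈ Finset.range n, X i ω :=
        mul_le_mul_of_nonpos_left hωn hba
      have : (n:ℝ) * klBer x p = (n:ℝ) * a + (b - a) * ((n:ℝ) * x) := by
        rw [hkl]; ring
      linarith
    have hεf : (ε : ℝ) ≤ f (n-1) ω := by
      rw [hεcoe, hfval]
      exact Real.exp_le_exp.2 (hstep1.trans hstep2)
    rw [hA_def]
    exact le_trans hεf (Finset.le_sup' (fun k => f k ω) (Finset.self_mem_range_succ (n-1)))
  calc P (⋃ n ∈ {n : ℕ | m ≤ n}, {ω | ∑ i ∈ Finset.range n, X i ω ≤ (n:ℝ) * x})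
      ≤ P (⋃ N, A N) := measure_mono hsub
    _ = ⨆ N, P (A N) := (hmonoA.directed_le).measure_iUnion
    _ ≤ ENNReal.ofReal (Real.exp (-(m:ℝ) * klBer x p)) := iSup_le hbound
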